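/- Let F be a field that is a finite-dimensional field extension of the field ℚ₂ of 2-adic numbers. Then the subgroup of squares (F^×)² = {x² : x ∈ F^×} has finite index in the multiplicative group F^×; equivalently, the quotient group F^×/(F^×)² is finite. -/

import Mathlib

open Metric Set NNReal

set_option maxHeartbeats 2000000 in
/-- **Lemma.** Let `F` be a finite-dimensional field extension of the field `ℚ₂` of `2`-adic
numbers. Then the subgroup of squares `(F^×)²` has finite index in `F^×`. -/
theorem squares_finiteIndex_of_finiteDimensional_Q2 (F : Type*) [Field F]
    [Algebra ℚ_[2] F] [FiniteDimensional ℚ_[2] F] :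
    ((powMonoidHom 2 : Fˣ →* Fˣ).range).FiniteIndex := by
  classical
  -- set up a norm on `F` pulled back from coordinates
  set d : ℕ := Module.finrank ℚ_[2] F with hd
  let b : Module.Basis (Fin d) ℚ_[2] F := Module.finBasis ℚ_[2] F
  let e : F ≃ₗ[ℚ_[2]] (Fin d → ℚ_[2]) := b.equivFun
  letI : NormedAddCommGroup F :=
    NormedAddCommGroup.induced F (Fin d → ℚ_[2]) e.toLinearMap e.injective
  letI : NormedSpace ℚ_[2] F :=
    NormedSpace.induced ℚ_[2] F (Fin d → ℚ_[2]) e.toLinearMap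
  have hnorm : ∀ x : F, ‖x‖ = ‖e x‖ := fun x => rfl
  have hiso : Isometry (⇑e) :=
    AddMonoidHomClass.isometry_of_norm e.toLinearMap (fun x => rfl)
  haveI : ProperSpace F := by
    constructor
    intro x r
    have h1 : closedBall x r = ⇑e.symm '' closedBall (e x) r := by
      ext z
      simp only [mem_closedBall, Set.mem_image]
      constructor
      · intro hz
        refine ⟨e z, ?_, by simp⟩
        have h := hiso.dist_eq z x
        rw [h]; exact hz
      · rintro ⟨w, hw, rfl⟩
        have h := hiso.dist_eq (e.symm w) x
        rw [e.apply_symm_apply] at h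
        rw [← h]; exact hw
    rw [h1]
    exact (isCompact_closedBall _ _).image
      (e.symm.toLinearMap.continuous_of_finiteDimensional)
  -- multiplication bound
  let M : F →ₗ[ℚ_[2]] (F →L[ℚ_[2]] F) :=
    (LinearMap.toContinuousLinearMap (𝕜 := ℚ_[2]) (E := F) (F' := F)).toLinearMap ∘ₗ
      (LinearMap.mul ℚ_[2] F)
  let Mc : F →L[ℚ_[2]] (F →L[ℚ_[2]] F) := LinearMap.toContinuousLinearMap M
  set C : ℝ := max ‖Mc‖ 1 with hCdef
  have hC : 1 ≤ C := le_max_right _ _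
  have hC0 : (0 : ℝ) < C := lt_of_lt_of_le one_pos hC
  have hmul : ∀ x y : F, ‖x * y‖ ≤ C * ‖x‖ * ‖y‖ := by
    intro x y
    have h1 : x * y = (Mc x) y := rfl
    calc ‖x * y‖ = ‖(Mc x) y‖ := by rw [h1]
      _ ≤ ‖Mc x‖ * ‖y‖ := (Mc x).le_opNorm y
      _ ≤ (‖Mc‖ * ‖x‖) * ‖y‖ :=
          mul_le_mul_of_nonneg_right (Mc.le_opNorm x) (norm_nonneg y)
      _ ≤ C * ‖x‖ * ‖y‖ :=
          mul_le_mul_of_nonneg_right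
            (mul_le_mul_of_nonneg_right (le_max_left _ _) (norm_nonneg x)) (norm_nonneg y)
  -- norm of 2 • z
  have hsmul2 : ∀ z : F, ‖(2 : F) * z‖ = 2⁻¹ * ‖z‖ := by
    intro z
    have h1 : (2 : F) * z = (2 : ℚ_[2]) • z := by
      rw [Algebra.smul_def, map_ofNat]
    rw [h1, norm_smul]
    congr 1
    rw [show (2 : ℚ_[2]) = ((2 : ℕ) : ℚ_[2]) by norm_num, Padic.norm_p]
    norm_num
  have two_ne : (2 : F) ≠ 0 := by
    haveI : CharZero F := charZero_of_injective_algebraMap (algebraMap ℚ_[2] F).injective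
    exact two_ne_zero
  -- Newton iteration: elements close to 1 are squares
  have hsqrt : ∀ u : F, ‖u - 1‖ ≤ (32 * C)⁻¹ → ∃ w : F, (1 + w) ^ 2 = u := by
    intro u hu
    set ρ : ℝ := (8 * C)⁻¹ with hρ
    have hρ0 : 0 < ρ := by positivity
    have hhalf : ∀ z : F, ‖z / 2‖ = 2 * ‖z‖ := by
      intro z
      have := hsmul2 (z / 2)
      rw [mul_div_cancel₀ _ two_ne] at this
      rw [this]; ring
    set g : F → F := fun t => (u - 1 - t ^ 2) / 2 with hg
    have hmaps : MapsTo g (closedBall (0 : F) ρ) (closedBall (0 : F) ρ) := by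
      intro t ht
      rw [mem_closedBall_zero_iff] at ht ⊢
      have h1 : ‖t ^ 2‖ ≤ C * ρ ^ 2 := by
        calc ‖t ^ 2‖ = ‖t * t‖ := by ring_nf
          _ ≤ C * ‖t‖ * ‖t‖ := hmul t t
          _ ≤ C * ρ * ρ := by
              apply mul_le_mul _ ht (norm_nonneg t) (by positivity)
              exact mul_le_mul_of_nonneg_left ht hC0.le
          _ = C * ρ ^ 2 := by ring
      have h3 : ‖u - 1 - t ^ 2‖ ≤ (32 * C)⁻¹ + C * ρ ^ 2 :=
        le_trans (norm_sub_le _ _) (add_le_add hu h1)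
      have h4 : C * ρ ^ 2 = ρ / 8 := by rw [hρ]; field_simp
      have h5 : (32 * C)⁻¹ = ρ / 4 := by rw [hρ]; field_simp; ring
      calc ‖g t‖ = 2 * ‖u - 1 - t ^ 2‖ := hhalf _
        _ ≤ 2 * (ρ / 4 + ρ / 8) := by rw [h4, h5] at h3; linarith
        _ ≤ ρ := by linarith
    have hlip : LipschitzOnWith (2⁻¹ : ℝ≥0) g (closedBall (0 : F) ρ) := by
      rw [lipschitzOnWith_iff_dist_le_mul]
      intro t ht t' ht'
      rw [mem_closedBall_zero_iff] at ht ht'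
      rw [dist_eq_norm, dist_eq_norm]
      have key : g t - g t' = (t' + t) * (t' - t) / 2 := by
        simp only [hg]; ring
      have h6 : ‖(t' + t) * (t' - t)‖ ≤ C * (2 * ρ) * ‖t - t'‖ := by
        calc ‖(t' + t) * (t' - t)‖ ≤ C * ‖t' + t‖ * ‖t' - t‖ := hmul _ _
          _ ≤ C * (2 * ρ) * ‖t - t'‖ := by
              rw [norm_sub_rev t' t]
              apply mul_le_mul_of_nonneg_right _ (norm_nonneg _)
              apply mul_le_mul_of_nonneg_left _ hC0.le
              calc ‖t' + t‖ ≤ ‖t'‖ + ‖t‖ := norm_add_le _ _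
                _ ≤ 2 * ρ := by linarith
      have hcoe : ((2⁻¹ : ℝ≥0) : ℝ) = 2⁻¹ := by norm_num
      rw [hcoe]
      have h8 : 4 * C * ρ = 2⁻¹ := by rw [hρ]; field_simp; ring
      calc ‖g t - g t'‖ = 2 * ‖(t' + t) * (t' - t)‖ := by rw [key]; exact hhalf _
        _ ≤ 2 * (C * (2 * ρ) * ‖t - t'‖) := by linarith
        _ = (4 * C * ρ) * ‖t - t'‖ := by ring
        _ = 2⁻¹ * ‖t - t'‖ := by rw [h8]
    have hcontr : ContractingWith (2⁻¹ : ℝ≥0) (hmaps.restrict g _ _) := by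
      constructor
      · rw [NNReal.inv_lt_one_iff] <;> norm_num
      · exact hlip.mapsToRestrict hmaps
    have h0mem : (0 : F) ∈ closedBall (0 : F) ρ := by
      rw [mem_closedBall, dist_self]; exact hρ0.le
    obtain ⟨t, -, hfix, -, -⟩ := hcontr.exists_fixedPoint'
      Metric.isClosed_closedBall.isComplete hmaps h0mem (edist_ne_top _ _)
    refine ⟨t, ?_⟩
    have hfix' : (u - 1 - t ^ 2) / 2 = t := hfix
    rw [div_eq_iff two_ne] at hfix'
    linear_combination -hfix'
  -- norm of multiplication by powers of 2
  have h2pow : ∀ (m : ℤ) (z : F), ‖(2 : F) ^ m * z‖ = (2 : ℝ) ^ (-m) * ‖z‖ := by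
    intro m z
    have h1 : (2 : F) ^ m = algebraMap ℚ_[2] F ((2 : ℚ_[2]) ^ m) := by
      rw [map_zpow₀, map_ofNat]
    rw [h1, ← Algebra.smul_def, norm_smul, norm_zpow]
    congr 1
    rw [show (2 : ℚ_[2]) = ((2 : ℕ) : ℚ_[2]) by norm_num, Padic.norm_p]
    push_cast
    rw [inv_zpow, ← zpow_neg]
  -- the compact annulus
  set δ : ℝ := (32 * C)⁻¹ with hδ
  have hδ0 : 0 < δ := by positivity
  have hδle : δ ≤ 1 := by
    rw [hδ]
    rw [inv_le_one_iff₀]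
    right; linarith
  set K : Set F := closedBall (0 : F) 4 \ ball (0 : F) 1 with hK
  have hKco : IsCompact K := (isCompact_closedBall _ _).diff isOpen_ball
  have hKmem : ∀ y ∈ K, 1 ≤ ‖y‖ ∧ ‖y‖ ≤ 4 := by
    intro y hy
    rw [hK, mem_diff, mem_closedBall_zero_iff, mem_ball_zero_iff] at hy
    exact ⟨not_lt.mp hy.2, hy.1⟩
  have hKne : ∀ y ∈ K, y ≠ 0 := by
    intro y hy h0
    have := (hKmem y hy).1
    rw [h0, norm_zero] at this
    linarith
  set ε : F → ℝ := fun y => δ / (C * ‖y⁻¹‖ + 1) with hε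
  have hεpos : ∀ y : F, 0 < ε y := by
    intro y
    have : 0 < C * ‖y⁻¹‖ + 1 := by positivity
    exact div_pos hδ0 this
  have hεle : ∀ y : F, ε y ≤ δ := by
    intro y
    apply div_le_self hδ0.le
    have : 0 ≤ C * ‖y⁻¹‖ := by positivity
    linarith
  -- key: points in a small ball around y ∈ K are y times a square
  have hkey : ∀ y ∈ K, ∀ z ∈ ball y (ε y), ∃ w : F, w ≠ 0 ∧ y * w ^ 2 = z := by
    intro y hy z hz
    have hy0 : y ≠ 0 := hKne y hy
    rw [mem_ball, dist_eq_norm] at hz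
    have hz0 : z ≠ 0 := by
      intro h0
      rw [h0, zero_sub, norm_neg] at hz
      have h1 := (hKmem y hy).1
      have h2 := lt_of_lt_of_le hz (hεle y)
      linarith
    set u : F := y⁻¹ * z with hu
    have hu1 : u - 1 = y⁻¹ * (z - y) := by
      rw [hu, mul_sub, inv_mul_cancel₀ hy0]
    have hunorm : ‖u - 1‖ ≤ (32 * C)⁻¹ := by
      rw [hu1]
      calc ‖y⁻¹ * (z - y)‖ ≤ C * ‖y⁻¹‖ * ‖z - y‖ := hmul _ _
        _ ≤ C * ‖y⁻¹‖ * ε y := by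
            apply mul_le_mul_of_nonneg_left hz.le (by positivity)
        _ ≤ δ := by
            have h1 : 0 < C * ‖y⁻¹‖ + 1 := by positivity
            have hee : ε y = δ / (C * ‖y⁻¹‖ + 1) := rfl
            rw [hee]
            calc C * ‖y⁻¹‖ * (δ / (C * ‖y⁻¹‖ + 1))
                ≤ (C * ‖y⁻¹‖ + 1) * (δ / (C * ‖y⁻¹‖ + 1)) := by
                  apply mul_le_mul_of_nonneg_right (by linarith)
                    (div_nonneg hδ0.le h1.le)
              _ = δ := by field_simp
        _ = (32 * C)⁻¹ := hδ
    obtain ⟨w', hw'⟩ := hsqrt u hunorm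
    refine ⟨1 + w', ?_, ?_⟩
    · intro h0
      rw [h0] at hw'
      simp at hw'
      rw [hu] at hw'
      exact hz0 (by
        have := hw'.symm
        field_simp at this
        simpa using this)
    · rw [hw', hu]
      field_simp
  -- extract a finite subcover of the annulus
  have hcov : K ⊆ ⋃ y : ↥K, ball ((y : F)) (ε (y : F)) := by
    intro z hz
    exact mem_iUnion.mpr ⟨⟨z, hz⟩, mem_ball_self (hεpos z)⟩
  obtain ⟨t, ht⟩ := hKco.elim_finite_subcover
    (fun y : ↥K => ball ((y : F)) (ε (y : F))) (fun _ => isOpen_ball) hcov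
  -- finiteness of the quotient
  haveI : Finite (Fˣ ⧸ (powMonoidHom 2 : Fˣ →* Fˣ).range) := by
    refine Finite.of_surjective
      (fun y : {y : ↥K // y ∈ t} =>
        (QuotientGroup.mk (Units.mk0 ((y : ↥K) : F) (hKne _ (y : ↥K).2)) :
          Fˣ ⧸ (powMonoidHom 2 : Fˣ →* Fˣ).range)) ?_
    intro q
    obtain ⟨x, rfl⟩ := QuotientGroup.mk_surjective q
    have hx0 : ((x : F)) ≠ 0 := Units.ne_zero x
    have hxpos : 0 < ‖(x : F)‖ := norm_pos_iff.mpr hx0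
    obtain ⟨n, hn1, hn2⟩ := exists_mem_Ico_zpow hxpos (by norm_num : (1 : ℝ) < 4)
    -- scale x by a square power of 2 into the annulus
    have ha0 : (2 : F) ^ n ≠ 0 := zpow_ne_zero n two_ne
    set s2 : Fˣ := Units.mk0 ((2 : F) ^ n) ha0 with hs2
    set x' : F := ((2 : F) ^ n) ^ 2 * (x : F) with hx'
    have hxnorm : ‖x'‖ = (4 : ℝ) ^ (-n) * ‖(x : F)‖ := by
      rw [hx']
      have h1 : ((2 : F) ^ n) ^ 2 = (2 : F) ^ (n * 2) := by
        rw [zpow_mul, zpow_two]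
        exact pow_two _
      rw [h1, h2pow]
      congr 1
      rw [show (4 : ℝ) = (2 : ℝ) ^ (2 : ℤ) by norm_num, ← zpow_mul]
      ring_nf
    have hx'K : x' ∈ K := by
      have h40 : (0 : ℝ) < (4 : ℝ) ^ n := by positivity
      have h4n : (0 : ℝ) < (4 : ℝ) ^ (-n) := by positivity
      have hb1 : 1 ≤ ‖x'‖ := by
        rw [hxnorm]
        have : (4 : ℝ) ^ (-n) * (4 : ℝ) ^ n ≤ (4 : ℝ) ^ (-n) * ‖(x : F)‖ :=
          mul_le_mul_of_nonneg_left hn1 h4n.le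
        rwa [← zpow_add₀ (by norm_num : (4 : ℝ) ≠ 0), neg_add_cancel, zpow_zero] at this
      have hb2 : ‖x'‖ ≤ 4 := by
        rw [hxnorm]
        have : (4 : ℝ) ^ (-n) * ‖(x : F)‖ ≤ (4 : ℝ) ^ (-n) * (4 : ℝ) ^ (n + 1) :=
          mul_le_mul_of_nonneg_left hn2.le h4n.le
        rwa [← zpow_add₀ (by norm_num : (4 : ℝ) ≠ 0), neg_add_cancel_left, zpow_one] at this
      rw [hK, mem_diff, mem_closedBall_zero_iff, mem_ball_zero_iff]
      exact ⟨hb2, not_lt.mpr hb1⟩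
    obtain ⟨y, hyt, hyball⟩ : ∃ y : ↥K, y ∈ t ∧ x' ∈ ball ((y : F)) (ε (y : F)) := by
      have := ht hx'K
      simp only [mem_iUnion, exists_prop] at this
      exact ⟨this.choose, this.choose_spec.1, this.choose_spec.2⟩
    obtain ⟨w, hw0, hwy⟩ := hkey (y : F) y.2 x' hyball
    refine ⟨⟨y, hyt⟩, ?_⟩
    rw [QuotientGroup.eq]
    set wu : Fˣ := Units.mk0 w hw0 with hwu
    refine ⟨wu * s2⁻¹, ?_⟩
    rw [powMonoidHom_apply]
    rw [Units.ext_iff]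
    have hy0 : ((y : F)) ≠ 0 := hKne _ y.2
    push_cast [hwu, hs2, Units.val_pow_eq_pow_val, Units.val_mul,
      Units.val_inv_eq_inv_val, Units.val_mk0]
    rw [hx'] at hwy
    field_simp
    linear_combination hwy
  exact Subgroup.finiteIndex_of_finite_quotient
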